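/- Let ℓ ≥ 2. If M is a 1-dimensional module over the KLR algebra R(ν) of type A^{(1)}_{ℓ−1} with |ν| = m, spanned by a vector v with 1_{\underline{i}} v = v for a unique sequence \underline{i} = (i_1,…,i_m) ∈ Seq(ν), then all x_r act as 0 on v, all ψ_r act as 0 on v, and \underline{i} satisfies either i_{r+1} = i_r + 1 (mod ℓ) for all r, or i_{r+1} = i_r − 1 (mod ℓ) for all r. Consequently ν = α_i + α_{i+1} + … + α_{i+m−1} or ν = α_i + α_{i−1} + … + α_{i−m+1} for some i ∈ ℤ/ℓℤ. -/
import Mathlib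


/-- The type `A^{(1)}_{ℓ-1}` Cartan matrix entry `a_{ij}` for `i j : ℤ/ℓℤ`. -/
def cartanA (ℓ : ℕ) (i j : ZMod ℓ) : ℤ :=
  if i = j then 2
  else if j = i + 1 ∧ j = i - 1 then -2
  else if j = i + 1 ∨ j = i - 1 then -1
  else 0

/-- Classification of 1-dimensional modules over the KLR algebra `R(ν)` of type
`A^{(1)}_{ℓ-1}`: if `M` is spanned by `v` with `1_s v = v` for a unique sequence `s`,
then all `x_r` and all `ψ_r` act by `0` on `v`, and `s` is either ascending
(`s_{r+1} = s_r + 1`) or descending (`s_{r+1} = s_r − 1`) modulo `ℓ`;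
consequently `ν = γ⁺_{i;m}` or `ν = γ⁻_{i;m}` for some `i ∈ ℤ/ℓℤ`. -/
theorem one_dimensional_KLR_classification
    (ℓ m : ℕ) (hℓ : 2 ≤ ℓ) (hm : 1 ≤ m)
    (V : Type*) [AddCommGroup V] [Module ℂ V]
    (E : (Fin m → ZMod ℓ) → Module.End ℂ V)
    (X : ℕ → Module.End ℂ V) (Ψ : ℕ → Module.End ℂ V)
    (v : V) (hv : v ≠ 0) (hspan : ∀ w : V, ∃ c : ℂ, w = c • v)
    (s : Fin m → ZMod ℓ) (hsv : E s v = v) (hother : ∀ t, t ≠ s → E t v = 0)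
    -- KLR relations:
    (hEE : ∀ t u, E t * E u = if t = u then E t else 0)
    (hXE : ∀ (r : ℕ), r < m → ∀ t, X r * E t = E t * X r)
    (hXX : ∀ r r', X r * X r' = X r' * X r)
    (hPsiE : ∀ (r : ℕ) (hr : r + 1 < m) t,
      Ψ r * E t = E (fun p => t (Equiv.swap (⟨r, by omega⟩ : Fin m) ⟨r + 1, hr⟩ p)) * Ψ r)
    (hPsiPsi : ∀ r r', r + 1 < r' → Ψ r * Ψ r' = Ψ r' * Ψ r)
    (hPsiSq : ∀ (r : ℕ) (hr : r + 1 < m) (t : Fin m → ZMod ℓ),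
      Ψ r * Ψ r * E t =
        if t ⟨r, by omega⟩ = t ⟨r + 1, hr⟩ then 0
        else if t ⟨r + 1, hr⟩ = t ⟨r, by omega⟩ + 1 ∨ t ⟨r + 1, hr⟩ = t ⟨r, by omega⟩ - 1 then
          (X r ^ (-(cartanA ℓ (t ⟨r, by omega⟩) (t ⟨r + 1, hr⟩))).toNat
            + X (r + 1) ^ (-(cartanA ℓ (t ⟨r + 1, hr⟩) (t ⟨r, by omega⟩))).toNat) * E t
        else E t)
    (hBraid : ∀ (r : ℕ) (hr : r + 2 < m) (t : Fin m → ZMod ℓ),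
      (Ψ r * Ψ (r + 1) * Ψ r - Ψ (r + 1) * Ψ r * Ψ (r + 1)) * E t =
        if t ⟨r, by omega⟩ = t ⟨r + 2, hr⟩ ∧
            (t ⟨r + 1, by omega⟩ = t ⟨r, by omega⟩ + 1 ∨
             t ⟨r + 1, by omega⟩ = t ⟨r, by omega⟩ - 1) then
          (if ℓ = 2 then (X r + X (r + 2)) * E t else E t)
        else 0)
    (hDot : ∀ (r : ℕ) (hr : r + 1 < m) (u : ℕ) (hu : u < m) (t : Fin m → ZMod ℓ),
      (Ψ r * X u - X (if u = r then r + 1 else if u = r + 1 then r else u) * Ψ r) * E t =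
        if u = r ∧ t ⟨r, by omega⟩ = t ⟨r + 1, hr⟩ then E t
        else if u = r + 1 ∧ t ⟨r, by omega⟩ = t ⟨r + 1, hr⟩ then -(E t)
        else 0)
    -- each `x_r` acts nilpotently on a finite-dimensional module:
    (hnil : ∀ (r : ℕ), r < m → ∃ n : ℕ, (X r) ^ (n + 1) = 0) :
    (∀ r : ℕ, r < m → X r v = 0) ∧
    (∀ r : ℕ, r + 1 < m → Ψ r v = 0) ∧
    ((∀ (r : ℕ) (hr : r + 1 < m), s ⟨r + 1, hr⟩ = s ⟨r, by omega⟩ + 1) ∨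
     (∀ (r : ℕ) (hr : r + 1 < m), s ⟨r + 1, hr⟩ = s ⟨r, by omega⟩ - 1)) ∧
    ((∃ i : ZMod ℓ, ∀ r : Fin m, s r = i + (r.val : ZMod ℓ)) ∨
     (∃ i : ZMod ℓ, ∀ r : Fin m, s r = i - (r.val : ZMod ℓ))) := by
  haveI : NeZero ℓ := ⟨by omega⟩
  -- Step 1: each X r kills v
  have hX : ∀ r : ℕ, r < m → X r v = 0 := by
    intro r hr
    obtain ⟨c, hc⟩ := hspan (X r v)
    obtain ⟨n, hn⟩ := hnil r hr
    have hpow : ∀ k : ℕ, (X r ^ k) v = c ^ k • v := by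
      intro k
      induction k with
      | zero => simp
      | succ k ih =>
        have h1 : (X r ^ (k + 1)) v = (X r ^ k) (X r v) := by
          rw [pow_succ, Module.End.mul_apply]
        rw [h1, hc, map_smul, ih, smul_smul, pow_succ]
        congr 1
        ring
    have h0 : c ^ (n + 1) • v = 0 := by
      rw [← hpow, hn, LinearMap.zero_apply]
    have hc0 : c = 0 := by
      have h2 := (smul_eq_zero.mp h0).resolve_right hv
      exact pow_eq_zero_iff (Nat.succ_ne_zero n) |>.mp h2
    rw [hc, hc0, zero_smul]
  -- Step 2: s has no equal adjacent entries and each Ψ r kills v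
  have hPsiMain : ∀ (r : ℕ) (hr : r + 1 < m),
      s ⟨r, by omega⟩ ≠ s ⟨r + 1, hr⟩ ∧ Ψ r v = 0 := by
    intro r hr
    obtain ⟨c, hc⟩ := hspan (Ψ r v)
    have happ : Ψ r v
        = c • E (fun p => s (Equiv.swap (⟨r, by omega⟩ : Fin m) ⟨r + 1, hr⟩ p)) v := by
      conv_lhs => rw [← hsv]
      rw [show Ψ r (E s v) = (Ψ r * E s) v from rfl, hPsiE r hr s, Module.End.mul_apply,
        hc, map_smul]
    by_cases heq : s (⟨r, by omega⟩ : Fin m) = s ⟨r + 1, hr⟩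
    · exfalso
      have hdot := hDot r hr r (by omega) s
      rw [if_pos (show r = r ∧ s (⟨r, by omega⟩ : Fin m) = s ⟨r + 1, hr⟩ from ⟨rfl, heq⟩)]
        at hdot
      rw [show (if r = r then r + 1 else if r = r + 1 then r else r) = r + 1 by simp] at hdot
      have h3 := congrArg (fun f : Module.End ℂ V => f v) hdot
      simp only [Module.End.mul_apply, LinearMap.sub_apply, hsv] at h3
      simp only [hX r (by omega), hc, map_zero, map_smul, hX (r + 1) hr, smul_zero,
        sub_zero, sub_self] at h3
      exact hv h3.symm
    · refine ⟨heq, ?_⟩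
      have hne : (fun p => s (Equiv.swap (⟨r, by omega⟩ : Fin m) ⟨r + 1, hr⟩ p)) ≠ s := by
        intro h
        apply heq
        have h4 := congrFun h (⟨r, by omega⟩ : Fin m)
        simpa [Equiv.swap_apply_left] using h4.symm
      rw [happ, hother _ hne, smul_zero]
  -- Step 3: adjacent entries are neighbors
  have hnb : ∀ (r : ℕ) (hr : r + 1 < m),
      s ⟨r + 1, hr⟩ = s ⟨r, by omega⟩ + 1 ∨ s ⟨r + 1, hr⟩ = s ⟨r, by omega⟩ - 1 := by
    intro r hr
    by_contra hno
    have hsq := hPsiSq r hr s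
    rw [if_neg (hPsiMain r hr).1, if_neg hno] at hsq
    have h5 := congrArg (fun f : Module.End ℂ V => f v) hsq
    simp only [Module.End.mul_apply, hsv] at h5
    simp only [(hPsiMain r hr).2, map_zero] at h5
    exact hv h5.symm
  -- Exclusivity of +1 / -1 when ℓ ≠ 2
  have hexcl : ℓ ≠ 2 → ∀ a : ZMod ℓ, a + 1 ≠ a - 1 := by
    intro hℓ2 a h
    have h2 : ((2 : ℕ) : ZMod ℓ) = 0 := by
      push_cast
      linear_combination h
    have hdvd : ℓ ∣ 2 := (ZMod.natCast_eq_zero_iff 2 ℓ).mp h2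
    have := Nat.le_of_dvd (by norm_num) hdvd
    omega
  -- No flips: s r ≠ s (r+2) when ℓ ≠ 2
  have hflip : ℓ ≠ 2 → ∀ (r : ℕ) (hr : r + 2 < m),
      s ⟨r, by omega⟩ ≠ s ⟨r + 2, hr⟩ := by
    intro hℓ2 r hr heq
    have hb := hBraid r hr s
    rw [if_pos ⟨heq, hnb r (by omega)⟩, if_neg hℓ2] at hb
    have h6 := congrArg (fun f : Module.End ℂ V => f v) hb
    simp only [Module.End.mul_apply, LinearMap.sub_apply, hsv] at h6
    simp only [(hPsiMain r (by omega)).2, (hPsiMain (r + 1) (by omega)).2, map_zero,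
      sub_zero, sub_self] at h6
    exact hv h6.symm
  -- Direction transfer when ℓ ≠ 2
  have hstep : ℓ ≠ 2 → ∀ (r : ℕ) (hr : r + 2 < m),
      (s ⟨r + 1, by omega⟩ = s ⟨r, by omega⟩ + 1 ↔
       s ⟨r + 2, hr⟩ = s ⟨r + 1, by omega⟩ + 1) := by
    intro hℓ2 r hr
    constructor
    · intro h1
      rcases hnb (r + 1) hr with h2 | h2
      · exact h2
      · exact absurd (by rw [h2, h1]; ring) (hflip hℓ2 r hr)
    · intro h2
      rcases hnb r (by omega) with h1 | h1
      · exact h1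
      · exact absurd (by rw [h2, h1]; ring) (hflip hℓ2 r hr)
  -- Step 4: constant direction
  have hdir : (∀ (r : ℕ) (hr : r + 1 < m), s ⟨r + 1, hr⟩ = s ⟨r, by omega⟩ + 1) ∨
              (∀ (r : ℕ) (hr : r + 1 < m), s ⟨r + 1, hr⟩ = s ⟨r, by omega⟩ - 1) := by
    by_cases hℓ2 : ℓ = 2
    · left
      intro r hr
      rcases hnb r hr with h | h
      · exact h
      · subst hℓ2
        have hz : ∀ a : ZMod 2, a - 1 = a + 1 := by decide
        rw [h, hz]
    · by_cases hm1 : m = 1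
      · left; intro r hr; omega
      · by_cases h0 : s ⟨1, by omega⟩ = s ⟨0, by omega⟩ + 1
        · left
          intro r
          induction r with
          | zero => intro hr; exact h0
          | succ k ih =>
            intro hr
            exact (hstep hℓ2 k hr).mp (ih (by omega))
        · right
          have hd0 : s ⟨1, by omega⟩ = s ⟨0, by omega⟩ - 1 :=
            (hnb 0 (by omega)).resolve_left h0
          intro r
          induction r with
          | zero => intro hr; exact hd0
          | succ k ih =>
            intro hr
            have hdk := ih (by omega)
            rcases hnb (k + 1) hr with h | h
            · exact absurd (((hstep hℓ2 k hr).mpr h).symm.trans hdk) (hexcl hℓ2 _)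
            · exact h
  -- Step 5: explicit form
  have hex : (∃ i : ZMod ℓ, ∀ r : Fin m, s r = i + (r.val : ZMod ℓ)) ∨
             (∃ i : ZMod ℓ, ∀ r : Fin m, s r = i - (r.val : ZMod ℓ)) := by
    rcases hdir with h | h
    · left
      refine ⟨s ⟨0, by omega⟩, ?_⟩
      have aux : ∀ k (hk : k < m), s ⟨k, hk⟩ = s ⟨0, by omega⟩ + ((k : ℕ) : ZMod ℓ) := by
        intro k
        induction k with
        | zero => intro hk; simp
        | succ k ih =>
          intro hk
          rw [h k hk, ih (by omega)]
          push_cast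
          ring
      intro r
      exact aux r.1 r.2
    · right
      refine ⟨s ⟨0, by omega⟩, ?_⟩
      have aux : ∀ k (hk : k < m), s ⟨k, hk⟩ = s ⟨0, by omega⟩ - ((k : ℕ) : ZMod ℓ) := by
        intro k
        induction k with
        | zero => intro hk; simp
        | succ k ih =>
          intro hk
          rw [h k hk, ih (by omega)]
          push_cast
          ring
      intro r
      exact aux r.1 r.2
  exact ⟨hX, fun r hr => (hPsiMain r hr).2, hdir, hex⟩
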